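/- Let t ≥ 2 and n be integers with t ≤ n ≤ 2t, and let I = I_t(P_n) = ⟨x_i x_{i+1} ⋯ x_{i+t−1} : 1 ≤ i ≤ n − t + 1⟩ ⊂ K[x_1,…,x_n] be the t-path ideal of the path P_n over a field K. Then v(I^k) = t·k − 1 for all k ≥ 1. -/

import Mathlib

open MvPolynomial

/-- A graded (homogeneous) ideal: one generated by homogeneous polynomials. -/
def IsHomogeneousIdeal {K : Type*} [Field K] {n : ℕ}
    (I : Ideal (MvPolynomial (Fin n) K)) : Prop :=
  ∃ G : Set (MvPolynomial (Fin n) K),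
    (∀ f ∈ G, ∃ d, f.IsHomogeneous d) ∧ I = Ideal.span G

/-- `Ass(I)`: the associated primes of `S/I`. -/
def Ass {K : Type*} [Field K] {n : ℕ} (I : Ideal (MvPolynomial (Fin n) K)) :
    Set (Ideal (MvPolynomial (Fin n) K)) :=
  associatedPrimes (MvPolynomial (Fin n) K) (MvPolynomial (Fin n) K ⧸ I)

/-- The local v-number `v_p(I)`. -/
noncomputable def vNumberAt {K : Type*} [Field K] {n : ℕ}
    (I p : Ideal (MvPolynomial (Fin n) K)) : ℕ :=
  sInf {d | ∃ f : MvPolynomial (Fin n) K, f.IsHomogeneous d ∧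
    I.colon (Ideal.span {f}) = p}

/-- The v-number `v(I)`. -/
noncomputable def vNumber {K : Type*} [Field K] {n : ℕ}
    (I : Ideal (MvPolynomial (Fin n) K)) : ℕ :=
  sInf {d | ∃ f : MvPolynomial (Fin n) K, ∃ p ∈ Ass I, f.IsHomogeneous d ∧
    I.colon (Ideal.span {f}) = p}

/-- `α(J)`: the least degree of a nonzero element of `J`. -/
noncomputable def alphaNum {K : Type*} [Field K] {n : ℕ}
    (J : Ideal (MvPolynomial (Fin n) K)) : ℕ :=
  sInf {d | ∃ f ∈ J, f ≠ 0 ∧ f.totalDegree = d}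

/-- `c(I) = max{α(p) : p ∈ Ass(I)}`. -/
noncomputable def cNum {K : Type*} [Field K] {n : ℕ}
    (I : Ideal (MvPolynomial (Fin n) K)) : ℕ :=
  sSup (alphaNum '' Ass I)

/-! ### Auxiliary material -/

section PathAux

variable {K : Type*} [Field K] {n : ℕ}

lemma aux_prodX (F : Finset (Fin n)) :
    (∏ j ∈ F, (X j : MvPolynomial (Fin n) K)) =
      monomial (∑ j ∈ F, Finsupp.single j 1) 1 := by
  classical
  induction F using Finset.induction_on with
  | empty => simp
  | @insert a F ha ih =>
      rw [Finset.prod_insert ha, Finset.sum_insert ha, ih]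
      rw [X, monomial_mul, mul_one]

lemma aux_degree_eq (d : Fin n →₀ ℕ) : d.degree = ∑ j : Fin n, d j := by
  rw [Finsupp.degree]
  exact Finset.sum_subset (Finset.subset_univ _)
    (fun x _ hx => by simpa using Finsupp.notMem_support_iff.mp hx)

lemma aux_degree_add (a b : Fin n →₀ ℕ) : (a + b).degree = a.degree + b.degree := by
  simp [aux_degree_eq, Finset.sum_add_distrib]

lemma aux_degree_smul (c : ℕ) (a : Fin n →₀ ℕ) : (c • a).degree = c * a.degree := by
  simp [aux_degree_eq, Finset.mul_sum]

lemma aux_degree_mono {a b : Fin n →₀ ℕ} (h : a ≤ b) : a.degree ≤ b.degree := by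
  simp only [aux_degree_eq]
  exact Finset.sum_le_sum fun j _ => h j

/-- The span of a set of variables is a prime ideal. -/
lemma aux_prime (A : Set (Fin n)) :
    (Ideal.span (X '' A : Set (MvPolynomial (Fin n) K))).IsPrime := by
  classical
  set φ : MvPolynomial (Fin n) K →ₐ[K] MvPolynomial {j : Fin n // j ∉ A} K :=
    aeval (fun j => if h : j ∈ A then 0 else X ⟨j, h⟩) with hφdef
  have hker : Ideal.span (X '' A : Set (MvPolynomial (Fin n) K)) = RingHom.ker φ := by
    apply le_antisymm
    · rw [Ideal.span_le]
      rintro _ ⟨j, hj, rfl⟩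
      simp [RingHom.mem_ker, φ, hj]
    · intro f hf
      set ψ : MvPolynomial {j : Fin n // j ∉ A} K →ₐ[K] MvPolynomial (Fin n) K :=
        rename Subtype.val with hψdef
      have key : ∀ g : MvPolynomial (Fin n) K,
          g - ψ (φ g) ∈ Ideal.span (X '' A : Set (MvPolynomial (Fin n) K)) := by
        intro g
        induction g using MvPolynomial.induction_on with
        | C a => simp [φ, ψ]
        | add p q hp hq =>
            have h := Ideal.add_mem _ hp hq
            have heq : p + q - ψ (φ (p + q)) = p - ψ (φ p) + (q - ψ (φ q)) := by
              simp only [map_add]; ring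
            rw [heq]; exact h
        | mul_X p j hp =>
            by_cases hj : j ∈ A
            · have hX : (X j : MvPolynomial (Fin n) K) ∈
                  Ideal.span (X '' A : Set (MvPolynomial (Fin n) K)) :=
                Ideal.subset_span ⟨j, hj, rfl⟩
              have h0 : φ (X j) = 0 := by simp [φ, hj]
              rw [map_mul, h0, mul_zero, map_zero, sub_zero]
              exact Ideal.mul_mem_left _ p hX
            · have h1 : ψ (φ (X j)) = X j := by simp [φ, ψ, hj]
              have heq : p * X j - ψ (φ (p * X j)) = (p - ψ (φ p)) * X j := by
                rw [map_mul, map_mul, h1]; ring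
              rw [heq]
              exact Ideal.mul_mem_right _ _ hp
      have h2 := key f
      rwa [RingHom.mem_ker.mp hf, map_zero, sub_zero] at h2
  rw [hker]
  exact RingHom.ker_isPrime φ

end PathAux

/-- The index set `[i, i+t) ⊆ Fin n`. -/
def pathFi (n t i : ℕ) : Finset (Fin n) :=
  Finset.univ.filter (fun j : Fin n => i ≤ (j : ℕ) ∧ (j : ℕ) < i + t)

/-- The exponent vector of the `i`-th path generator. -/
noncomputable def pathDv (n t i : ℕ) : Fin n →₀ ℕ :=
  ∑ j ∈ pathFi n t i, Finsupp.single j 1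

/-- Exponent vectors of the generators of `I^k`. -/
def pathDk (n t k : ℕ) : Set (Fin n →₀ ℕ) :=
  {d | ∃ l : List ℕ, l.length = k ∧ (∀ i ∈ l, i + t ≤ n) ∧
    d = (l.map (pathDv n t)).sum}

lemma pathDv_apply (n t i : ℕ) (j : Fin n) :
    pathDv n t i j = if i ≤ (j : ℕ) ∧ (j : ℕ) < i + t then 1 else 0 := by
  classical
  rw [pathDv, Finsupp.finset_sum_apply]
  rw [Finset.sum_congr rfl (fun x _ => Finsupp.single_apply)]
  rw [Finset.sum_ite_eq' (pathFi n t i) j (fun _ => 1)]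
  simp [pathFi]

lemma pathFi_card {n t i : ℕ} (h : i + t ≤ n) : (pathFi n t i).card = t := by
  have he : pathFi n t i = Finset.attachFin (Finset.Ico i (i + t))
      (fun m hm => lt_of_lt_of_le (Finset.mem_Ico.mp hm).2 h) := by
    ext j
    simp [pathFi, Finset.mem_attachFin, Finset.mem_Ico]
  rw [he, Finset.card_attachFin, Nat.card_Ico]
  omega

lemma pathDv_degree {n t i : ℕ} (h : i + t ≤ n) : (pathDv n t i).degree = t := by
  classical
  rw [aux_degree_eq]
  simp_rw [pathDv_apply]
  rw [Finset.sum_ite, Finset.sum_const, Finset.sum_const]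
  simpa [pathFi] using pathFi_card h

lemma list_sum_apply {n : ℕ} (l : List (Fin n →₀ ℕ)) (j : Fin n) :
    l.sum j = (l.map (fun d : Fin n →₀ ℕ => d j)).sum :=
  map_list_sum (Finsupp.applyAddHom j) l

lemma pathList_degree {n t : ℕ} (l : List ℕ) (hb : ∀ i ∈ l, i + t ≤ n) :
    ((l.map (pathDv n t)).sum).degree = t * l.length := by
  induction l with
  | nil => simp
  | cons i l' ih =>
      rw [List.map_cons, List.sum_cons, aux_degree_add, pathDv_degree (hb i (by simp)),
        ih (fun j hj => hb j (List.mem_cons_of_mem _ hj)), List.length_cons]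
      ring

lemma pathDk_zero (n t : ℕ) : pathDk n t 0 = {0} := by
  ext d
  constructor
  · rintro ⟨l, hl, -, rfl⟩
    rw [List.length_eq_zero_iff] at hl
    simp [hl]
  · rintro rfl
    exact ⟨[], rfl, by simp, by simp⟩

lemma pathDk_succ (n t k : ℕ) (d : Fin n →₀ ℕ) :
    d ∈ pathDk n t (k+1) ↔ ∃ a ∈ pathDk n t 1, ∃ b ∈ pathDk n t k, d = a + b := by
  constructor
  · rintro ⟨l, hl, hb, rfl⟩
    cases l with
    | nil => simp at hl
    | cons i l' =>
        refine ⟨pathDv n t i, ⟨[i], rfl, by simpa using hb i (by simp), by simp⟩,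
          (l'.map (pathDv n t)).sum, ⟨l', by simpa using hl,
            fun j hj => hb j (List.mem_cons_of_mem _ hj), rfl⟩, by simp⟩
  · rintro ⟨a, ⟨l₁, hl₁, hb₁, rfl⟩, b, ⟨l₂, hl₂, hb₂, rfl⟩, rfl⟩
    match l₁, hl₁ with
    | [i], _ =>
      refine ⟨i :: l₂, by simpa using hl₂, ?_, by simp⟩
      intro j hj
      rcases List.mem_cons.mp hj with rfl | hj
      · exact hb₁ j (by simp)
      · exact hb₂ j hj

/-- Powers of a monomial ideal are monomial ideals. -/
lemma monomial_span_pow {K : Type*} [Field K] {n t : ℕ} (k : ℕ) :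
    (Ideal.span ((fun d => monomial d (1:K)) '' pathDk n t 1)) ^ k
      = Ideal.span ((fun d => monomial d (1:K)) '' pathDk n t k) := by
  induction k with
  | zero =>
      rw [pow_zero, pathDk_zero, Ideal.one_eq_top, Set.image_singleton]
      rw [show (monomial (0 : Fin n →₀ ℕ) (1:K)) = 1 from by simp]
      exact (Ideal.span_singleton_one).symm
  | succ k ih =>
      rw [pow_succ', ih, Ideal.span_mul_span']
      congr 1
      ext x
      rw [Set.mem_mul]
      constructor
      · rintro ⟨_, ⟨a, ha, rfl⟩, _, ⟨b, hb, rfl⟩, rfl⟩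
        exact ⟨a + b, (pathDk_succ n t k _).mpr ⟨a, ha, b, hb, rfl⟩,
          by rw [monomial_mul, mul_one]⟩
      · rintro ⟨d, hd, rfl⟩
        obtain ⟨a, ha, b, hb, rfl⟩ := (pathDk_succ n t k d).mp hd
        exact ⟨monomial a 1, ⟨a, ha, rfl⟩, monomial b 1, ⟨b, hb, rfl⟩,
          by rw [monomial_mul, mul_one]⟩

section Key
variable {n t k : ℕ}

lemma key_E_degree (ht : 2 ≤ t) (htn : t ≤ n) (hk : 1 ≤ k) :
    ((k-1) • pathDv n t (n-t) + pathDv n (t-1) (n-t)).degree = t * k - 1 := by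
  rw [aux_degree_add, aux_degree_smul, pathDv_degree (by omega), pathDv_degree (by omega)]
  obtain ⟨k', rfl⟩ : ∃ k', k = k' + 1 := ⟨k-1, by omega⟩
  simp only [Nat.add_sub_cancel]
  rw [Nat.mul_succ, mul_comm k' t]
  have h2 : 0 ≤ t * k' := Nat.zero_le _
  generalize t * k' = a
  omega

lemma key_combo (ht : 2 ≤ t) (htn : t ≤ n) (hn2t : n ≤ 2 * t) (hk : 1 ≤ k)
    (l : List ℕ) (hlen : l.length = k) (hbound : ∀ i ∈ l, i + t ≤ n)
    (μ : Fin n →₀ ℕ)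
    (hled : (l.map (pathDv n t)).sum ≤
      μ + ((k-1) • pathDv n t (n-t) + pathDv n (t-1) (n-t))) :
    ∃ j : Fin n, ((j:ℕ) = n - 1 ∨ (j:ℕ) + 1 = n - t) ∧ μ j ≠ 0 := by
  have hn0 : 0 < n := by omega
  set s : ℕ := n - t with hs
  have happ : ∀ (m : Fin n), ((l.map (pathDv n t)).sum) m
      = (l.map (fun i => if i ≤ (m:ℕ) ∧ (m:ℕ) < i + t then 1 else 0)).sum := by
    intro m
    rw [list_sum_apply, List.map_map]
    have hfe : ((fun d : Fin n →₀ ℕ => d m) ∘ pathDv n t)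
        = fun i => if i ≤ (m:ℕ) ∧ (m:ℕ) < i + t then 1 else 0 := by
      funext i
      simp [Function.comp, pathDv_apply]
    rw [hfe]
  set E : Fin n →₀ ℕ := (k-1) • pathDv n t s + pathDv n (t-1) s with hE
  have hEapp : ∀ j : Fin n, E j =
      (k-1) * (if s ≤ (j:ℕ) ∧ (j:ℕ) < s + t then 1 else 0)
        + (if s ≤ (j:ℕ) ∧ (j:ℕ) < s + (t-1) then 1 else 0) := by
    intro j
    simp [hE, Finsupp.add_apply, Finsupp.smul_apply, pathDv_apply, smul_eq_mul]
  by_cases hall : ∀ i ∈ l, i = s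
  · set jN : Fin n := ⟨n-1, by omega⟩ with hjN
    refine ⟨jN, Or.inl rfl, ?_⟩
    have h1 : ((l.map (pathDv n t)).sum) jN = k := by
      rw [happ]
      have hrep : l.map (fun i => if i ≤ (jN:ℕ) ∧ (jN:ℕ) < i + t then 1 else 0)
          = List.replicate k 1 := by
        rw [List.eq_replicate_iff]
        refine ⟨by simpa using hlen, ?_⟩
        intro b hb
        obtain ⟨i, hi, rfl⟩ := List.mem_map.mp hb
        rw [hall i hi, if_pos (by constructor <;> simp [hjN] <;> omega)]
      rw [hrep, List.sum_replicate, smul_eq_mul, mul_one]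
    have h2 := Finsupp.le_def.mp hled jN
    rw [h1, Finsupp.add_apply] at h2
    have h3 : E jN = k - 1 := by
      rw [hEapp jN, if_pos (by constructor <;> simp [hjN] <;> omega),
        if_neg (by simp [hjN]; omega)]
      omega
    rw [h3] at h2
    omega
  · push_neg at hall
    obtain ⟨i₀, hi₀l, hi₀⟩ := hall
    have hi₀s : i₀ < s := by have := hbound i₀ hi₀l; omega
    have hs1 : 1 ≤ s := by omega
    set jS : Fin n := ⟨s-1, by omega⟩ with hjS
    refine ⟨jS, Or.inr (by simp [hjS]; omega), ?_⟩
    have hd1 : 1 ≤ ((l.map (pathDv n t)).sum) jS := by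
      rw [happ]
      have hmem : (1:ℕ) ∈ l.map (fun i => if i ≤ (jS:ℕ) ∧ (jS:ℕ) < i + t then 1 else 0) :=
        List.mem_map.mpr ⟨i₀, hi₀l,
          by rw [if_pos (by constructor <;> simp [hjS] <;> omega)]⟩
      exact List.single_le_sum (fun x _ => Nat.zero_le x) 1 hmem
    have h2 := Finsupp.le_def.mp hled jS
    rw [Finsupp.add_apply] at h2
    have h3 : E jS = 0 := by
      rw [hEapp jS, if_neg (by simp [hjS]; omega), if_neg (by simp [hjS]; omega)]
      omega
    rw [h3] at h2
    omega

lemma key_mem (ht : 2 ≤ t) (htn : t ≤ n) (hn2t : n ≤ 2 * t) (hk : 1 ≤ k)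
    (j : Fin n) (hj : (j:ℕ) = n - 1 ∨ (j:ℕ) + 1 = n - t) :
    ∃ d ∈ pathDk n t k,
      d ≤ Finsupp.single j 1 + ((k-1) • pathDv n t (n-t) + pathDv n (t-1) (n-t)) := by
  set s : ℕ := n - t with hs
  rcases hj with hj | hj
  · refine ⟨((List.replicate k s).map (pathDv n t)).sum,
      ⟨List.replicate k s, by simp, by intro i hi; rw [List.eq_of_mem_replicate hi]; omega, rfl⟩,
      ?_⟩
    rw [Finsupp.le_def]
    intro m
    rw [List.map_replicate, List.sum_replicate]
    simp only [Finsupp.coe_add, Pi.add_apply, Finsupp.smul_apply, smul_eq_mul,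
      Finsupp.single_apply, pathDv_apply]
    have hm := m.isLt
    rcases eq_or_ne j m with rfl | hne
    · rw [if_pos rfl]
      split_ifs <;> omega
    · rw [if_neg hne]
      have hne2 : (j:ℕ) ≠ (m:ℕ) := fun h => hne (Fin.ext h)
      split_ifs <;> omega
  · refine ⟨(((s-1) :: List.replicate (k-1) s).map (pathDv n t)).sum,
      ⟨(s-1) :: List.replicate (k-1) s, by simp; omega, ?_, rfl⟩, ?_⟩
    · intro i hi
      rcases List.mem_cons.mp hi with rfl | hi
      · omega
      · rw [List.eq_of_mem_replicate hi]; omega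
    · rw [Finsupp.le_def]
      intro m
      rw [List.map_cons, List.sum_cons, List.map_replicate, List.sum_replicate]
      simp only [Finsupp.coe_add, Pi.add_apply, Finsupp.smul_apply, smul_eq_mul,
        Finsupp.single_apply, pathDv_apply]
      have hm := m.isLt
      rcases eq_or_ne j m with rfl | hne
      · rw [if_pos rfl]
        split_ifs <;> omega
      · rw [if_neg hne]
        have hne2 : (j:ℕ) ≠ (m:ℕ) := fun h => hne (Fin.ext h)
        split_ifs <;> omega

end Key

/-- For integers `2 ≤ t ≤ n ≤ 2t`, the `t`-path ideal
`I = I_t(P_n) = ⟨x_i⋯x_{i+t−1}⟩` of the path `P_n` satisfies `v(I^k) = t·k − 1`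
for all `k ≥ 1`. -/
theorem stmt9 {K : Type*} [Field K] {n t : ℕ}
    (ht : 2 ≤ t) (htn : t ≤ n) (hn2t : n ≤ 2 * t)
    (I : Ideal (MvPolynomial (Fin n) K))
    (hI : I = Ideal.span {g | ∃ i : ℕ, i + t ≤ n ∧
      g = ∏ j ∈ Finset.univ.filter (fun j : Fin n => i ≤ (j : ℕ) ∧ (j : ℕ) < i + t),
        X j}) :
    ∀ k : ℕ, 1 ≤ k → (vNumber (I ^ k) : ℤ) = (t : ℤ) * k - 1 := by
  intro k hk
  classical
  -- monomial description of I and its powers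
  have hIm : I = Ideal.span ((fun d => monomial d (1:K)) '' pathDk n t 1) := by
    rw [hI]; congr 1; ext g
    constructor
    · rintro ⟨i, hi, rfl⟩
      exact ⟨pathDv n t i, ⟨[i], rfl, by simpa using hi, by simp⟩,
        by rw [pathDv]; exact (aux_prodX _).symm⟩
    · rintro ⟨d, ⟨l, hl, hb, rfl⟩, rfl⟩
      match l, hl with
      | [i], _ =>
        refine ⟨i, by simpa using hb i (by simp), ?_⟩
        simp only [List.map_cons, List.map_nil, List.sum_cons, List.sum_nil, add_zero]
        rw [pathDv]; exact (aux_prodX _).symm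
  have hIpow : ∀ m : ℕ, I ^ m = Ideal.span ((fun d => monomial d (1:K)) '' pathDk n t m) := by
    intro m; rw [hIm, monomial_span_pow]
  -- the witness data
  set E : Fin n →₀ ℕ := (k-1) • pathDv n t (n-t) + pathDv n (t-1) (n-t) with hE
  set F : MvPolynomial (Fin n) K := monomial E 1 with hF
  set A : Set (Fin n) := {j : Fin n | (j : ℕ) = n - 1 ∨ (j : ℕ) + 1 = n - t} with hA
  set p : Ideal (MvPolynomial (Fin n) K) := Ideal.span (X '' A) with hp
  -- the colon computation
  have hcolon : (I ^ k).colon (Ideal.span {F}) = p := by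
    apply le_antisymm
    · intro r hr
      rw [Ideal.mem_colon_span_singleton, hIpow k, mem_ideal_span_monomial_image] at hr
      rw [hp, mem_ideal_span_X_image]
      intro μ hμ
      have hsup : μ + E ∈ (r * F).support := by
        rw [mem_support_iff, hF, coeff_mul_monomial, mul_one]
        exact mem_support_iff.mp hμ
      obtain ⟨d, ⟨l, hlen, hbound, rfl⟩, hled⟩ := hr _ hsup
      rw [hE] at hled
      obtain ⟨j, hjA, hjne⟩ := key_combo ht htn hn2t hk l hlen hbound μ hled
      exact ⟨j, hjA, hjne⟩
    · rw [hp, Ideal.span_le]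
      rintro _ ⟨j, hjA, rfl⟩
      rw [SetLike.mem_coe, Ideal.mem_colon_span_singleton]
      have hXF : (X j : MvPolynomial (Fin n) K) * F = monomial (Finsupp.single j 1 + E) 1 := by
        rw [hF, X, monomial_mul, one_mul]
      rw [hXF, hIpow k, mem_ideal_span_monomial_image]
      intro xi hxi
      rw [support_monomial, if_neg (one_ne_zero : (1:K) ≠ 0)] at hxi
      obtain rfl := Finset.mem_singleton.mp hxi
      obtain ⟨d, hd, hle⟩ := key_mem ht htn hn2t hk j hjA
      exact ⟨d, hd, by rw [hE]; exact hle⟩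
  have hpprime : p.IsPrime := by rw [hp]; exact aux_prime A
  have hass : p ∈ Ass (I ^ k) := by
    refine isAssociatedPrime_iff.mpr ⟨hpprime, Submodule.Quotient.mk F, ?_⟩
    rw [← hcolon]
    ext r
    rw [Ideal.mem_colon_span_singleton, Submodule.mem_colon_singleton, Submodule.mem_bot,
      ← Submodule.Quotient.mk_smul, Submodule.Quotient.mk_eq_zero, smul_eq_mul]
  have hFhom : F.IsHomogeneous (t * k - 1) := by
    rw [hF]
    exact isHomogeneous_monomial 1 (by rw [hE]; exact key_E_degree ht htn hk)
  -- conclude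
  have hmem : t * k - 1 ∈ {d | ∃ f : MvPolynomial (Fin n) K, ∃ q ∈ Ass (I ^ k),
      f.IsHomogeneous d ∧ (I ^ k).colon (Ideal.span {f}) = q} :=
    ⟨F, p, hass, hFhom, hcolon⟩
  have hlow : ∀ d ∈ {d | ∃ f : MvPolynomial (Fin n) K, ∃ q ∈ Ass (I ^ k),
      f.IsHomogeneous d ∧ (I ^ k).colon (Ideal.span {f}) = q}, t * k - 1 ≤ d := by
    rintro d ⟨f, q, hqass, hfhom, hcol⟩
    have hq : q.IsPrime := hqass.isPrime
    have hfne : f ≠ 0 := by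
      rintro rfl
      apply hq.ne_top
      rw [Ideal.eq_top_iff_one, ← hcol, Ideal.mem_colon_span_singleton, mul_zero]
      exact zero_mem _
    have hIq : I ^ k ≤ q := by
      rw [← hcol]
      intro r hr
      exact Ideal.mem_colon_span_singleton.mpr (Ideal.mul_mem_right _ _ hr)
    have hg0 : (monomial (pathDv n t 0) 1 : MvPolynomial (Fin n) K) ∈ I := by
      rw [hIm]
      exact Ideal.subset_span ⟨pathDv n t 0, ⟨[0], rfl, by simpa using htn, by simp⟩, rfl⟩
    have hg0q : (monomial (pathDv n t 0) 1 : MvPolynomial (Fin n) K) ∈ q :=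
      hq.mem_of_pow_mem k (hIq (Ideal.pow_mem_pow hg0 k))
    have hprod : (∏ j ∈ pathFi n t 0, (X j : MvPolynomial (Fin n) K)) ∈ q := by
      rw [aux_prodX]
      have hdv : pathDv n t 0 = ∑ j ∈ pathFi n t 0, Finsupp.single j 1 := rfl
      rw [← hdv]
      exact hg0q
    haveI := hq
    obtain ⟨j, hjF, hXjq⟩ := Ideal.IsPrime.prod_mem_iff.mp hprod
    have hXf : f * X j ∈ I ^ k := by
      have h1 : (X j : MvPolynomial (Fin n) K) ∈ (I ^ k).colon (Ideal.span {f}) :=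
        hcol.symm ▸ hXjq
      have h2 := Ideal.mem_colon_span_singleton.mp h1
      rwa [mul_comm] at h2
    have hne : f * X j ≠ 0 := mul_ne_zero hfne (X_ne_zero j)
    obtain ⟨μ, hμ⟩ := support_nonempty.mpr hne
    have hhom : (f * X j).IsHomogeneous (d + 1) := hfhom.mul (isHomogeneous_X K j)
    have hdeg : μ.degree = d + 1 := by
      have h3 := hhom (mem_support_iff.mp hμ)
      rw [Finsupp.degree_eq_weight_one]
      exact h3
    rw [hIpow k, mem_ideal_span_monomial_image] at hXf
    obtain ⟨dd, ⟨l, hlen, hbound, rfl⟩, hle⟩ := hXf μ hμ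
    have h4 : t * k ≤ μ.degree := by
      have h5 := aux_degree_mono hle
      rwa [pathList_degree l hbound, hlen] at h5
    rw [hdeg] at h4
    exact Nat.sub_le_iff_le_add.mpr h4
  have hv : vNumber (I ^ k) = t * k - 1 := by
    unfold vNumber
    exact le_antisymm (Nat.sInf_le hmem) (le_csInf ⟨_, hmem⟩ hlow)
  rw [hv]
  have h1 : 1 ≤ t * k := Nat.one_le_iff_ne_zero.mpr (Nat.mul_ne_zero (by omega) (by omega))
  push_cast [Nat.cast_sub h1]
  ring
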